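/- Assume there exist c > 0 and 0 < t₁ < t₂ ≤ 1 such that f(ar) ≥ c for almost every r ∈ [t₁,t₂]. Let (d_k)_{k≥1} be a sequence of positive reals such that for every ε ∈ (0,1) there exists K with w₋((1+ε)k) ≤ d_k ≤ w₊((1−ε)k) for all k > K. Then ln d_k = −2k ln k + o(k ln k) as k → ∞, i.e. lim_{k→∞} (ln d_k)/(k ln k) = −2. -/
import Mathlib


open Filter Topology MeasureTheory

/-- `f_t = ∫₀¹ f(ar) r^{t-3} dr`. -/
noncomputable def fT (a : ℝ) (f : ℝ → ℝ) (t : ℝ) : ℝ :=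
  ∫ r in (0:ℝ)..1, f (a * r) * r ^ (t - 3)

/-- `w₋(t) = t⁴ · f_t² · (aκe/t)^{2t}`. -/
noncomputable def wMinus (a κ : ℝ) (f : ℝ → ℝ) (t : ℝ) : ℝ :=
  t ^ (4 : ℝ) * (fT a f t) ^ 2 * (a * κ * Real.exp 1 / t) ^ (2 * t)

/-- `w₊(t) = t⁸ · f_t² · (aκe/t)^{2t}`. -/
noncomputable def wPlus (a κ : ℝ) (f : ℝ → ℝ) (t : ℝ) : ℝ :=
  t ^ (8 : ℝ) * (fT a f t) ^ 2 * (a * κ * Real.exp 1 / t) ^ (2 * t)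

lemma fT_bound (a : ℝ) (ha : 0 < a) (f : ℝ → ℝ) (hf : Measurable f)
    (hf01 : ∀ r ∈ Set.Icc (0 : ℝ) a, f r ∈ Set.Icc (0 : ℝ) 1)
    (c t₁ t₂ : ℝ) (ht₁ : 0 < t₁) (ht₁₂ : t₁ < t₂) (ht₂ : t₂ ≤ 1)
    (hlower : ∀ᵐ r ∂(volume : Measure ℝ), r ∈ Set.Icc t₁ t₂ → c ≤ f (a * r))
    {t : ℝ} (ht : 3 ≤ t) :
    c * (t₂ - t₁) * t₁ ^ (t - 3) ≤ fT a f t ∧ fT a f t ≤ 1 := by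
  set g : ℝ → ℝ := fun r => f (a * r) * r ^ (t - 3) with hg
  have hmeas : Measurable g := (hf.comp (measurable_const_mul a)).mul
    ((Real.continuous_rpow_const (by linarith : (0:ℝ) ≤ t - 3)).measurable)
  have hg01 : ∀ r ∈ Set.Icc (0:ℝ) 1, 0 ≤ g r ∧ g r ≤ 1 := by
    intro r hr
    have har : a * r ∈ Set.Icc (0:ℝ) a :=
      ⟨mul_nonneg ha.le hr.1, by nlinarith [hr.2, hr.1]⟩
    have hfr := hf01 _ har
    have hrp0 : 0 ≤ r ^ (t - 3) := Real.rpow_nonneg hr.1 _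
    have hrp1 : r ^ (t - 3) ≤ 1 := Real.rpow_le_one hr.1 hr.2 (by linarith)
    exact ⟨mul_nonneg hfr.1 hrp0, mul_le_one₀ hfr.2 hrp0 hrp1⟩
  have hInt : ∀ x y : ℝ, 0 ≤ x → y ≤ 1 → x ≤ y → IntervalIntegrable g volume x y := by
    intro x y hx hy hxy
    rw [intervalIntegrable_iff_integrableOn_Ioc_of_le hxy]
    apply Measure.integrableOn_of_bounded (M := 1)
    · simp [measure_Ioc_lt_top.ne]
    · exact hmeas.aestronglyMeasurable
    · refine (ae_restrict_iff' measurableSet_Ioc).2 (Filter.Eventually.of_forall ?_)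
      intro r hr
      have h01 : r ∈ Set.Icc (0:ℝ) 1 := ⟨le_of_lt (lt_of_le_of_lt hx hr.1), hr.2.trans hy⟩
      have := hg01 r h01
      rw [Real.norm_eq_abs, abs_of_nonneg this.1]
      exact this.2
  constructor
  · have h0t₁ : 0 ≤ t₁ := ht₁.le
    have ht₂1 : t₂ ≤ 1 := ht₂
    have ht₁1 : t₁ ≤ 1 := ht₁₂.le.trans ht₂
    have ht₁t₂ : t₁ ≤ t₂ := ht₁₂.le
    have ht₂0 : 0 ≤ t₂ := h0t₁.trans ht₁t₂
    have hI1 := hInt 0 t₁ le_rfl ht₁1 h0t₁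
    have hI2 := hInt t₁ t₂ h0t₁ ht₂1 ht₁t₂
    have hI3 := hInt t₂ 1 ht₂0 le_rfl ht₂1
    have hsplit : fT a f t = (∫ r in (0:ℝ)..t₁, g r) + (∫ r in t₁..t₂, g r)
        + (∫ r in t₂..(1:ℝ), g r) := by
      rw [fT]
      rw [← intervalIntegral.integral_add_adjacent_intervals (hI1.trans hI2) hI3,
        ← intervalIntegral.integral_add_adjacent_intervals hI1 hI2]
    have hnn1 : 0 ≤ ∫ r in (0:ℝ)..t₁, g r :=
      intervalIntegral.integral_nonneg h0t₁ (fun u hu => (hg01 u ⟨hu.1, hu.2.trans ht₁1⟩).1)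
    have hnn3 : 0 ≤ ∫ r in t₂..(1:ℝ), g r :=
      intervalIntegral.integral_nonneg ht₂1 (fun u hu => (hg01 u ⟨ht₂0.trans hu.1, hu.2⟩).1)
    have hmid : c * (t₂ - t₁) * t₁ ^ (t - 3) ≤ ∫ r in t₁..t₂, g r := by
      have hae : (fun _ : ℝ => c * t₁ ^ (t - 3)) ≤ᵐ[volume.restrict (Set.Icc t₁ t₂)] g := by
        rw [Filter.EventuallyLE, ae_restrict_iff' measurableSet_Icc]
        filter_upwards [hlower] with r hr hmem
        have hrr : t₁ ^ (t - 3) ≤ r ^ (t - 3) :=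
          Real.rpow_le_rpow h0t₁ hmem.1 (by linarith)
        have har : a * r ∈ Set.Icc (0:ℝ) a :=
          ⟨mul_nonneg ha.le (h0t₁.trans hmem.1), by nlinarith [hmem.2.trans ht₂1, h0t₁.trans hmem.1]⟩
        exact mul_le_mul (hr hmem) hrr (Real.rpow_nonneg h0t₁ _) (hf01 _ har).1
      have := intervalIntegral.integral_mono_ae_restrict ht₁t₂
        (intervalIntegrable_const) hI2 hae
      calc c * (t₂ - t₁) * t₁ ^ (t - 3) = (t₂ - t₁) • (c * t₁ ^ (t - 3)) := by
            simp [smul_eq_mul]; ring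
        _ = ∫ _ in t₁..t₂, c * t₁ ^ (t - 3) := (intervalIntegral.integral_const _).symm
        _ ≤ ∫ r in t₁..t₂, g r := this
    linarith [hsplit, hnn1, hnn3, hmid]
  · have := intervalIntegral.integral_mono_on (by norm_num : (0:ℝ) ≤ 1)
      (hInt 0 1 le_rfl le_rfl (by norm_num)) (intervalIntegrable_const (c := (1:ℝ)))
      (fun x hx => (hg01 x hx).2)
    simpa [fT] using this

lemma base_inv_k : Tendsto (fun k : ℕ => ((k:ℝ))⁻¹) atTop (𝓝 0) :=
  tendsto_inv_atTop_zero.comp tendsto_natCast_atTop_atTop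

lemma base_inv_logk : Tendsto (fun k : ℕ => (Real.log k)⁻¹) atTop (𝓝 0) :=
  tendsto_inv_atTop_zero.comp (Real.tendsto_log_atTop.comp tendsto_natCast_atTop_atTop)

/-- General asymptotics for `log ((sk)^p F(sk)² (b/(sk))^{2sk}) / (k log k)`. -/
lemma logw_div (p s b : ℝ) (hs : 0 < s) (hb : 0 < b) (F : ℝ → ℝ)
    (C₁ C₂ : ℝ)
    (hF : ∀ t : ℝ, 3 ≤ t → (0 < F t ∧ C₁ + (t - 3) * C₂ ≤ Real.log (F t) ∧ Real.log (F t) ≤ 0)) :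
    Tendsto (fun k : ℕ =>
        Real.log ((s * k) ^ p * (F (s * k)) ^ 2 * (b / (s * k)) ^ (2 * (s * k)))
          / (k * Real.log k)) atTop (𝓝 (-2 * s)) := by
  have hsk : Tendsto (fun k : ℕ => s * (k:ℝ)) atTop atTop :=
    (tendsto_natCast_atTop_atTop).const_mul_atTop hs
  have hev : ∀ᶠ k : ℕ in atTop, 2 ≤ k ∧ 3 ≤ s * (k:ℝ) :=
    (eventually_ge_atTop 2).and (hsk.eventually_ge_atTop 3)
  have key : ∀ k : ℕ, 2 ≤ k → 3 ≤ s * (k:ℝ) →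
      (0:ℝ) < k ∧ 0 < Real.log k ∧ 0 < s * (k:ℝ) := by
    intro k hk2 hsk3
    have hk1 : (1:ℝ) < (k:ℝ) := by exact_mod_cast hk2.trans_lt' (by norm_num)
    exact ⟨by positivity, Real.log_pos hk1, by linarith⟩
  have hB : Tendsto (fun k : ℕ => 2 * Real.log (F (s * k)) / ((k:ℝ) * Real.log k))
      atTop (𝓝 0) := by
    have hLo : Tendsto (fun k : ℕ =>
        (2*C₁ - 6*C₂) * (((k:ℝ))⁻¹ * (Real.log k)⁻¹) + (2*s*C₂) * (Real.log k)⁻¹)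
        atTop (𝓝 0) := by
      have := ((base_inv_k.mul base_inv_logk).const_mul (2*C₁ - 6*C₂)).add
        (base_inv_logk.const_mul (2*s*C₂))
      simpa using this
    refine tendsto_of_tendsto_of_tendsto_of_le_of_le' hLo tendsto_const_nhds ?_ ?_
    · filter_upwards [hev] with k ⟨hk2, hsk3⟩
      obtain ⟨hkpos, hlkpos, hskpos⟩ := key k hk2 hsk3
      have hD : (0:ℝ) < (k:ℝ) * Real.log k := by positivity
      have hlow := (hF _ hsk3).2.1
      have h1 : (2*C₁ - 6*C₂) * (((k:ℝ))⁻¹ * (Real.log k)⁻¹) + (2*s*C₂) * (Real.log k)⁻¹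
          = 2 * (C₁ + (s * k - 3) * C₂) / ((k:ℝ) * Real.log k) := by
        field_simp
        ring
      rw [h1]
      gcongr
    · filter_upwards [hev] with k ⟨hk2, hsk3⟩
      obtain ⟨hkpos, hlkpos, hskpos⟩ := key k hk2 hsk3
      have hD : (0:ℝ) < (k:ℝ) * Real.log k := by positivity
      exact div_nonpos_of_nonpos_of_nonneg (by linarith [(hF _ hsk3).2.2]) hD.le
  have hA : Tendsto (fun k : ℕ =>
      p * Real.log s * (((k:ℝ))⁻¹ * (Real.log k)⁻¹) + p * ((k:ℝ))⁻¹
        + 2*s*(Real.log b - Real.log s) * (Real.log k)⁻¹ + (-2*s)) atTop (𝓝 (-2*s)) := by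
    have := (((base_inv_k.mul base_inv_logk).const_mul (p * Real.log s)).add
      (base_inv_k.const_mul p)).add (base_inv_logk.const_mul (2*s*(Real.log b - Real.log s)))
    have h2 := this.add (tendsto_const_nhds (x := (-2*s)) (f := atTop (α := ℕ)))
    simpa using h2
  have := hA.add hB
  rw [add_zero] at this
  refine this.congr' ?_
  filter_upwards [hev] with k ⟨hk2, hsk3⟩
  obtain ⟨hkpos, hlkpos, hskpos⟩ := key k hk2 hsk3
  have hFpos := (hF _ hsk3).1
  have hlog : Real.log ((s * k) ^ p * (F (s * k)) ^ 2 * (b / (s * k)) ^ (2 * (s * k)))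
      = p * (Real.log s + Real.log k) + 2 * Real.log (F (s * k))
        + (2 * (s * k)) * (Real.log b - (Real.log s + Real.log k)) := by
    rw [Real.log_mul (by positivity) (by positivity),
      Real.log_mul (by positivity) (by positivity),
      Real.log_rpow hskpos, Real.log_pow, Real.log_rpow (by positivity),
      Real.log_div hb.ne' hskpos.ne', Real.log_mul hs.ne' (by positivity)]
    push_cast
    ring
  rw [hlog]
  have hk0 : (k:ℝ) ≠ 0 := hkpos.ne'
  have hlk0 : Real.log (k:ℝ) ≠ 0 := hlkpos.ne'
  field_simp
  ring

theorem stmt10 (a κ : ℝ) (ha : 0 < a) (hκ : 0 < κ)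
    (f : ℝ → ℝ) (hf : Measurable f)
    (hf01 : ∀ r ∈ Set.Icc (0 : ℝ) a, f r ∈ Set.Icc (0 : ℝ) 1)
    (c t₁ t₂ : ℝ) (hc : 0 < c) (ht₁ : 0 < t₁) (ht₁₂ : t₁ < t₂) (ht₂ : t₂ ≤ 1)
    (hlower : ∀ᵐ r ∂(volume : Measure ℝ), r ∈ Set.Icc t₁ t₂ → c ≤ f (a * r))
    (d : ℕ → ℝ) (hd : ∀ k : ℕ, 1 ≤ k → 0 < d k)
    (hsq : ∀ ε ∈ Set.Ioo (0 : ℝ) 1, ∃ K : ℕ, ∀ k : ℕ, K < k →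
      wMinus a κ f ((1 + ε) * k) ≤ d k ∧ d k ≤ wPlus a κ f ((1 - ε) * k)) :
    Tendsto (fun k : ℕ => Real.log (d k) / (k * Real.log k)) atTop (𝓝 (-2)) := by
  set b : ℝ := a * κ * Real.exp 1 with hbdef
  have hb : 0 < b := by positivity
  -- properties of fT needed by logw_div
  set C₁ : ℝ := Real.log (c * (t₂ - t₁)) with hC₁
  set C₂ : ℝ := Real.log t₁ with hC₂
  have hC : 0 < c * (t₂ - t₁) := by nlinarith
  have hFprop : ∀ t : ℝ, 3 ≤ t →
      (0 < fT a f t ∧ C₁ + (t - 3) * C₂ ≤ Real.log (fT a f t) ∧ Real.log (fT a f t) ≤ 0) := by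
    intro t ht
    obtain ⟨hlo, hhi⟩ := fT_bound a ha f hf hf01 c t₁ t₂ ht₁ ht₁₂ ht₂ hlower ht
    have hlopos : 0 < c * (t₂ - t₁) * t₁ ^ (t - 3) := by positivity
    have hpos : 0 < fT a f t := hlopos.trans_le hlo
    refine ⟨hpos, ?_, Real.log_nonpos hpos.le hhi⟩
    have := Real.log_le_log hlopos hlo
    rw [Real.log_mul hC.ne' (Real.rpow_pos_of_pos ht₁ _).ne', Real.log_rpow ht₁] at this
    rw [hC₁, hC₂]
    linarith [this]
  -- the two tendsto facts for a given ε ∈ (0,1)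
  have hMain : ∀ ε : ℝ, 0 < ε → ε < 1 →
      Tendsto (fun k : ℕ => Real.log (wMinus a κ f ((1 + ε) * k)) / (k * Real.log k))
        atTop (𝓝 (-2 * (1 + ε))) ∧
      Tendsto (fun k : ℕ => Real.log (wPlus a κ f ((1 - ε) * k)) / (k * Real.log k))
        atTop (𝓝 (-2 * (1 - ε))) := by
    intro ε hε0 hε1
    constructor
    · have := logw_div 4 (1 + ε) b (by linarith) hb (fT a f) C₁ C₂ hFprop
      exact this.congr (fun k => by simp [wMinus, hbdef])
    · have := logw_div 8 (1 - ε) b (by linarith) hb (fT a f) C₁ C₂ hFprop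
      exact this.congr (fun k => by simp [wPlus, hbdef])
  -- positivity of wMinus for large argument
  have hwMpos : ∀ t : ℝ, 3 ≤ t → 0 < wMinus a κ f t := by
    intro t ht
    have htpos : (0:ℝ) < t := by linarith
    have := (hFprop t ht).1
    rw [wMinus]
    positivity
  refine tendsto_order.2 ⟨?_, ?_⟩
  · -- lower: ∀ l < -2, eventually l < x k
    intro l hl
    set ε : ℝ := min ((-2 - l)/4) (1/2) with hεdef
    have hε0 : 0 < ε := lt_min (by linarith) (by norm_num)
    have hε1 : ε < 1 := (min_le_right _ _).trans_lt (by norm_num)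
    have hεl : ε ≤ (-2 - l)/4 := min_le_left _ _
    obtain ⟨K, hK⟩ := hsq ε ⟨hε0, hε1⟩
    have hg := (hMain ε hε0 hε1).1
    have hlt : l < -2 * (1 + ε) := by nlinarith
    have hev1 : ∀ᶠ k : ℕ in atTop,
        l < Real.log (wMinus a κ f ((1 + ε) * k)) / (k * Real.log k) :=
      hg.eventually (eventually_gt_nhds hlt)
    have hskev : ∀ᶠ k : ℕ in atTop, 3 ≤ (1 + ε) * (k:ℝ) :=
      ((tendsto_natCast_atTop_atTop).const_mul_atTop (by linarith : (0:ℝ) < 1 + ε)).eventually_ge_atTop 3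
    filter_upwards [hev1, hskev, eventually_gt_atTop K, eventually_ge_atTop 2]
      with k h1 h3 hKk hk2
    refine h1.trans_le ?_
    have hk1 : (1:ℝ) < (k:ℝ) := by exact_mod_cast hk2.trans_lt' (by norm_num)
    have hD : (0:ℝ) < (k:ℝ) * Real.log k := by
      have := Real.log_pos hk1; positivity
    have hle := (hK k hKk).1
    have := Real.log_le_log (hwMpos _ h3) hle
    gcongr
  · intro u hu
    set ε : ℝ := min ((u + 2)/4) (1/2) with hεdef
    have hε0 : 0 < ε := lt_min (by linarith) (by norm_num)
    have hε1 : ε < 1 := (min_le_right _ _).trans_lt (by norm_num)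
    have hεl : ε ≤ (u + 2)/4 := min_le_left _ _
    obtain ⟨K, hK⟩ := hsq ε ⟨hε0, hε1⟩
    have hg := (hMain ε hε0 hε1).2
    have hlt : -2 * (1 - ε) < u := by nlinarith
    have hev1 : ∀ᶠ k : ℕ in atTop,
        Real.log (wPlus a κ f ((1 - ε) * k)) / (k * Real.log k) < u :=
      hg.eventually (eventually_lt_nhds hlt)
    filter_upwards [hev1, eventually_gt_atTop K, eventually_ge_atTop 2]
      with k h1 hKk hk2
    refine lt_of_le_of_lt ?_ h1
    have hk1 : (1:ℝ) < (k:ℝ) := by exact_mod_cast hk2.trans_lt' (by norm_num)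
    have hD : (0:ℝ) < (k:ℝ) * Real.log k := by
      have := Real.log_pos hk1; positivity
    have hdk : 0 < d k := hd k (by omega)
    have hle := (hK k hKk).2
    have := Real.log_le_log hdk hle
    gcongr
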